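/- Let V : ℝⁿ → ℝ be continuously differentiable, let m₁, …, mₙ > 0, and define the approximate action S̄(x,x',t) = Σ_{j=1}^{n} mⱼ·(xⱼ − x'ⱼ)²/(2t) − V̄(x,x')·t for t ≠ 0, where V̄(x,x') = ∫₀¹ V(τx + (1−τ)x') dτ. Then S̄ satisfies the Hamilton–Jacobi equation exactly up to a term quadratic in t: for all x, x' ∈ ℝⁿ and t ≠ 0, ∂S̄/∂t + Σ_{j=1}^{n} (1/(2mⱼ))·(∂S̄/∂xⱼ)² + V(x) = t² · Σ_{j=1}^{n} (1/(2mⱼ))·(∂V̄/∂xⱼ(x,x'))². In particular the left-hand side is O(t²) as t → 0 for fixed x, x'. -/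

import Mathlib

open MeasureTheory

set_option maxHeartbeats 1000000

theorem KS_action_hamilton_jacobi (n : ℕ) (V : (Fin n → ℝ) → ℝ) (hV : ContDiff ℝ 1 V)
    (m : Fin n → ℝ) (hm : ∀ j, 0 < m j)
    (Vbar : (Fin n → ℝ) → (Fin n → ℝ) → ℝ)
    (hVbar : ∀ x x', Vbar x x' = ∫ τ in (0:ℝ)..1, V (τ • x + (1 - τ) • x'))
    (Sbar : (Fin n → ℝ) → (Fin n → ℝ) → ℝ → ℝ)
    (hSbar : ∀ x x' t, Sbar x x' t
      = (∑ j, m j * (x j - x' j) ^ 2 / (2 * t)) - Vbar x x' * t)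
    (x x' : Fin n → ℝ) (t : ℝ) (ht : t ≠ 0) :
    deriv (fun s : ℝ => Sbar x x' s) t
      + (∑ j, (1 / (2 * m j)) * (fderiv ℝ (fun y => Sbar y x' t) x (Pi.single j 1)) ^ 2)
      + V x
    = t ^ 2 * ∑ j, (1 / (2 * m j)) * (fderiv ℝ (fun y => Vbar y x') x (Pi.single j 1)) ^ 2 := by
  classical
  have hVd : Differentiable ℝ V := hV.differentiable one_ne_zero
  have hV' : Continuous (fderiv ℝ V) := hV.continuous_fderiv one_ne_zero
  -- inner affine map
  set c : ℝ → (Fin n → ℝ) → (Fin n → ℝ) := fun τ y => τ • y + (1 - τ) • x' with hc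
  have hinner : ∀ (τ : ℝ) (y : Fin n → ℝ),
      HasFDerivAt (fun z => c τ z) (τ • ContinuousLinearMap.id ℝ (Fin n → ℝ)) y := by
    intro τ y
    simpa [hc] using ((τ • ContinuousLinearMap.id ℝ (Fin n → ℝ)).hasFDerivAt).add_const ((1 - τ) • x')
  have hccont : Continuous fun p : ℝ × (Fin n → ℝ) => c p.1 p.2 := by
    simp only [hc]; fun_prop
  have hccont1 : ∀ y, Continuous fun τ : ℝ => c τ y := fun y => by
    simp only [hc]; fun_prop
  -- derivative of F in the parameter
  set F' : (Fin n → ℝ) → ℝ → (Fin n → ℝ) →L[ℝ] ℝ := fun y τ =>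
    (fderiv ℝ V (c τ y)).comp (τ • ContinuousLinearMap.id ℝ (Fin n → ℝ)) with hF'
  have hdiffF : ∀ (τ : ℝ) (y : Fin n → ℝ), HasFDerivAt (fun z => V (c τ z)) (F' y τ) y := by
    intro τ y
    exact ((hVd (c τ y)).hasFDerivAt).comp y (hinner τ y)
  -- bound
  obtain ⟨C, hC⟩ : ∃ C, ∀ z ∈ (fun p : ℝ × (Fin n → ℝ) => c p.1 p.2) ''
      (Set.Icc (0:ℝ) 1 ×ˢ Metric.closedBall x 1), ‖fderiv ℝ V z‖ ≤ C := by
    refine ((isCompact_Icc.prod (isCompact_closedBall x 1)).image hccont).exists_bound_of_continuousOn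
      hV'.continuousOn
  have hF'cont : ∀ y, Continuous fun τ => F' y τ := by
    intro y
    apply Continuous.clm_comp
    · exact hV'.comp (hccont1 y)
    · exact (continuous_id.smul continuous_const)
  -- differentiation under the integral sign
  set W : (Fin n → ℝ) → ℝ := fun y => ∫ τ in (0:ℝ)..1, V (c τ y) with hWdef
  set L : (Fin n → ℝ) →L[ℝ] ℝ := ∫ τ in (0:ℝ)..1, F' x τ with hL
  have hWcont : ∀ y, Continuous fun τ => V (c τ y) := by
    intro y; exact hV.continuous.comp (hccont1 y)
  have hWL : HasFDerivAt W L x := by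
    refine intervalIntegral.hasFDerivAt_integral_of_dominated_of_fderiv_le
      (F := fun y τ => V (c τ y)) (F' := F') (bound := fun _ => C) (Metric.ball_mem_nhds x one_pos) ?_ ?_ ?_ ?_ ?_ ?_
    · exact Filter.Eventually.of_forall fun y => ((hWcont y).aestronglyMeasurable)
    · exact ((hWcont x).intervalIntegrable 0 1)
    · exact (hF'cont x).aestronglyMeasurable
    · refine Filter.Eventually.of_forall fun τ hτ y hy => ?_
      rw [Set.uIoc_of_le (by norm_num : (0:ℝ) ≤ 1)] at hτ
      have hz : c τ y ∈ (fun p : ℝ × (Fin n → ℝ) => c p.1 p.2) ''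
          (Set.Icc (0:ℝ) 1 ×ˢ Metric.closedBall x 1) :=
        ⟨(τ, y), ⟨⟨le_of_lt hτ.1, hτ.2⟩, Metric.ball_subset_closedBall hy⟩, rfl⟩
      calc ‖F' y τ‖ ≤ ‖fderiv ℝ V (c τ y)‖ * ‖τ • ContinuousLinearMap.id ℝ (Fin n → ℝ)‖ :=
            ContinuousLinearMap.opNorm_comp_le _ _
        _ ≤ C * 1 := by
            refine mul_le_mul (hC _ hz) ?_ (norm_nonneg _)
              (le_trans (norm_nonneg _) (hC _ hz))
            calc ‖τ • ContinuousLinearMap.id ℝ (Fin n → ℝ)‖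
                ≤ ‖τ‖ * ‖ContinuousLinearMap.id ℝ (Fin n → ℝ)‖ :=
                  ContinuousLinearMap.opNorm_smul_le _ _
              _ ≤ 1 * 1 := by
                  refine mul_le_mul ?_ ContinuousLinearMap.norm_id_le (norm_nonneg _) zero_le_one
                  rw [Real.norm_eq_abs, abs_of_pos hτ.1]; exact hτ.2
              _ = 1 := one_mul 1
        _ = C := mul_one C
    · exact intervalIntegrable_const
    · exact Filter.Eventually.of_forall fun τ _ y _ => hdiffF τ y
  have hWeq : (fun y => Vbar y x') = W := by
    funext y; rw [hVbar]
  -- value of L on a vector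
  have hLapp : ∀ v : Fin n → ℝ, L v = ∫ τ in (0:ℝ)..1, τ * (fderiv ℝ V (c τ x)) v := by
    intro v
    rw [hL, ContinuousLinearMap.intervalIntegral_apply ((hF'cont x).intervalIntegrable 0 1)]
    congr 1
    funext τ
    simp [hF', ContinuousLinearMap.smul_apply, smul_eq_mul]
  -- the key identity: L (x - x') = V x - Vbar x x'
  have hg : ∀ τ : ℝ, HasDerivAt (fun σ => V (c σ x)) ((fderiv ℝ V (c τ x)) (x - x')) τ := by
    intro τ
    have hcd : HasDerivAt (fun σ => c σ x) (x - x') τ := by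
      have h1 : HasDerivAt (fun σ : ℝ => σ • x) ((1:ℝ) • x) τ := (hasDerivAt_id τ).smul_const x
      have h2 : HasDerivAt (fun σ : ℝ => (1 - σ) • x') ((0 - 1 : ℝ) • x') τ :=
        ((hasDerivAt_const τ (1:ℝ)).sub (hasDerivAt_id τ)).smul_const x'
      simpa [hc, sub_eq_add_neg] using h1.fun_add h2
    exact ((hVd (c τ x)).hasFDerivAt).comp_hasDerivAt τ hcd
  have hgcont : Continuous fun τ => (fderiv ℝ V (c τ x)) (x - x') :=
    (hV'.comp (hccont1 x)).clm_apply continuous_const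
  have hIBP : (∫ τ in (0:ℝ)..1, τ * ((fderiv ℝ V (c τ x)) (x - x')))
      = V (c 1 x) - ∫ τ in (0:ℝ)..1, V (c τ x) := by
    have := intervalIntegral.integral_mul_deriv_eq_deriv_mul
      (u := fun τ : ℝ => τ) (u' := fun _ => (1:ℝ))
      (v := fun τ => V (c τ x)) (v' := fun τ => (fderiv ℝ V (c τ x)) (x - x'))
      (fun τ _ => hasDerivAt_id τ) (fun τ _ => hg τ)
      (intervalIntegrable_const) ((hgcont).intervalIntegrable 0 1)
    simpa using this
  have hkey : L (x - x') = V x - Vbar x x' := by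
    rw [hLapp, hIBP, hVbar]
    simp [hc]
  -- coordinates
  set D : Fin n → ℝ := fun j => L (Pi.single j 1) with hD
  have hsumD : ∑ j, (x j - x' j) * D j = V x - Vbar x x' := by
    rw [← hkey]
    have : (x - x') = ∑ j, (x j - x' j) • (Pi.single j 1 : Fin n → ℝ) := by
      funext i
      simp [Finset.sum_apply, Pi.single_apply, Finset.sum_ite_eq']
    rw [this, map_sum]
    simp [hD, _root_.map_smul, smul_eq_mul]
  -- fderiv of Sbar in x
  set Φ : (Fin n → ℝ) →L[ℝ] ℝ :=
    (∑ j, (m j * (2 * (x j - x' j)) / (2 * t)) • (ContinuousLinearMap.proj j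
      : (Fin n → ℝ) →L[ℝ] ℝ)) - t • L with hΦ
  have hSx : HasFDerivAt (fun y => Sbar y x' t) Φ x := by
    have hfun : (fun y => Sbar y x' t)
        = fun y => (∑ j, (m j / (2 * t)) * (y j - x' j) ^ 2) - (W y) * t := by
      funext y
      rw [hSbar]
      have h1 : Vbar y x' = W y := congrFun hWeq y
      rw [h1]
      congr 1
      exact Finset.sum_congr rfl (fun j _ => by ring)
    rw [hfun]
    refine HasFDerivAt.sub ?_ (hWL.mul_const t)
    have hterm : ∀ j : Fin n, HasFDerivAt (fun y : Fin n → ℝ => (m j / (2 * t)) * (y j - x' j) ^ 2)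
        ((m j * (2 * (x j - x' j)) / (2 * t)) • (ContinuousLinearMap.proj j
          : (Fin n → ℝ) →L[ℝ] ℝ)) x := by
      intro j
      have h1 : HasFDerivAt (fun y : Fin n → ℝ => y j - x' j)
          ((ContinuousLinearMap.proj j : (Fin n → ℝ) →L[ℝ] ℝ)) x :=
        (ContinuousLinearMap.proj j : (Fin n → ℝ) →L[ℝ] ℝ).hasFDerivAt.sub_const (x' j)
      have h2 : HasFDerivAt (fun y : Fin n → ℝ => (y j - x' j) ^ 2)
          ((2 * (x j - x' j)) • (ContinuousLinearMap.proj j : (Fin n → ℝ) →L[ℝ] ℝ)) x := by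
        simp only [pow_two]
        have := h1.fun_mul h1
        rw [two_mul, add_smul]
        exact this
      have h3 := h2.const_mul (m j / (2 * t))
      have heq : (m j * (2 * (x j - x' j)) / (2 * t)) • (ContinuousLinearMap.proj j
            : (Fin n → ℝ) →L[ℝ] ℝ)
          = (m j / (2 * t)) • (2 * (x j - x' j)) • (ContinuousLinearMap.proj j
            : (Fin n → ℝ) →L[ℝ] ℝ) := by
        rw [smul_smul]
        congr 1
        ring
      rw [heq]
      exact h3
    have := HasFDerivAt.fun_sum (fun j (_ : j ∈ Finset.univ) => hterm j)
    simpa using this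
  -- deriv of Sbar in t
  have hSt : HasDerivAt (fun s : ℝ => Sbar x x' s)
      ((∑ j, -(m j * (x j - x' j) ^ 2) / (2 * t ^ 2)) - Vbar x x') t := by
    have hfun : (fun s : ℝ => Sbar x x' s)
        = fun s => (∑ j, m j * (x j - x' j) ^ 2 / (2 * s)) - Vbar x x' * s := by
      funext s; rw [hSbar]
    rw [hfun]
    refine HasDerivAt.sub ?_ (by simpa using (hasDerivAt_id t).const_mul (Vbar x x'))
    have hterm : ∀ j : Fin n, HasDerivAt (fun s : ℝ => m j * (x j - x' j) ^ 2 / (2 * s))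
        (-(m j * (x j - x' j) ^ 2) / (2 * t ^ 2)) t := by
      intro j
      have h2 : HasDerivAt (fun s : ℝ => 2 * s) 2 t := by
        simpa using (hasDerivAt_id t).const_mul (2:ℝ)
      have := (hasDerivAt_const t (m j * (x j - x' j) ^ 2)).div h2 (by
        simp [ht])
      refine this.congr_deriv ?_
      rw [div_eq_div_iff (by simp [ht]) (by simp [ht])]
      ring
    exact HasDerivAt.fun_sum (fun j _ => hterm j)
  rw [hSt.deriv, hSx.fderiv, hWeq, hWL.fderiv]
  -- compute Φ on basis vectors
  have hΦapp : ∀ j, Φ (Pi.single j 1) = m j * (x j - x' j) / t - t * D j := by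
    intro j
    rw [hΦ]
    simp only [ContinuousLinearMap.sub_apply, ContinuousLinearMap.smul_apply,
      ContinuousLinearMap.sum_apply, ContinuousLinearMap.proj_apply, hD, smul_eq_mul]
    rw [Finset.sum_eq_single j]
    · rw [Pi.single_eq_same]
      field_simp
    · intro i _ hij
      rw [Pi.single_eq_of_ne hij]
      ring
    · intro h; exact absurd (Finset.mem_univ j) h
  simp only [hΦapp]
  -- final algebra
  have expand : ∀ j, (1 / (2 * m j)) * (m j * (x j - x' j) / t - t * D j) ^ 2
      = m j * (x j - x' j) ^ 2 / (2 * t ^ 2) - (x j - x' j) * D j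
        + t ^ 2 * ((1 / (2 * m j)) * (D j) ^ 2) := by
    intro j
    have hmj := (hm j).ne'
    field_simp
    ring
  simp only [expand]
  rw [Finset.sum_add_distrib, Finset.sum_sub_distrib, hsumD, ← Finset.mul_sum]
  have : ∑ j, -(m j * (x j - x' j) ^ 2) / (2 * t ^ 2)
      = -∑ j, m j * (x j - x' j) ^ 2 / (2 * t ^ 2) := by
    rw [← Finset.sum_neg_distrib]
    congr 1; funext j; ring
  rw [this]
  ring
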